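/- arXiv:2410.19400 — 3 statements merged into one kernel-verified Lean document; each statement's English description precedes it below -/
import Mathlib

section
/- In the deterministic tabular setting, the value-aware policy π* globally maximizes the regularizer R̄: for every policy π, R̄(π) ≤ R̄(π*), the inequality holding in the extended reals; moreover R̄(π*) is a real number (in particular R̄(π*) > −∞). -/
open scoped BigOperators Classical

/-- Extended-real logarithm of a (nonnegative) real number, with `elog 0 = ⊥` (i.e. `log 0 = -∞`).
Note that in `EReal` we have `0 * ⊥ = 0`, matching the convention `0·(−∞) = 0`. -/
noncomputable def elog (x : ℝ) : EReal := if x = 0 then ⊥ else ((Real.log x : ℝ) : EReal)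

/-- The regularizer
`R̄(π) = Σ_s d(s)·Σ_{s'} N(s'|s)·(exp(α V(s'))/Z(s))·log(Σ_a π(a|s)·𝟙[f(s,a)=s'])`,
valued in the extended reals. -/
noncomputable def RbarDet {S A : Type*} [Fintype S] [Fintype A]
    (d : S → ℝ) (N : S → S → ℝ) (V : S → ℝ) (α : ℝ) (Z : S → ℝ)
    (f : S → A → S) (π : S → A → ℝ) : EReal :=
  ∑ s, (d s : EReal) *
    ∑ s', ((N s s' * (Real.exp (α * V s') / Z s) : ℝ) : EReal) *
      elog (∑ a, π s a * (if f s a = s' then (1 : ℝ) else 0))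

private lemma ereal_coe_sum {ι : Type*} (s : Finset ι) (g : ι → ℝ) :
    ((∑ i ∈ s, g i : ℝ) : EReal) = ∑ i ∈ s, ((g i : ℝ) : EReal) :=
  map_sum (⟨⟨Real.toEReal, EReal.coe_zero⟩, EReal.coe_add⟩ : ℝ →+ EReal) g s

private lemma ereal_sum_eq_bot {ι : Type*} {s : Finset ι} {g : ι → EReal} {i : ι}
    (hi : i ∈ s) (hg : g i = ⊥) : ∑ j ∈ s, g j = ⊥ := by
  rw [← Finset.add_sum_erase s g hi, hg, EReal.bot_add]

/-- Rewrite an EReal sum `Σ p·elog q` as a real number when `q` doesn't vanish where `p` doesn't. -/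
private lemma sum_mul_elog_eq {ι : Type*} [Fintype ι] (p q : ι → ℝ)
    (h : ∀ i, p i ≠ 0 → q i ≠ 0) :
    ∑ i, (p i : EReal) * elog (q i)
      = ((∑ i, if p i = 0 then 0 else p i * Real.log (q i) : ℝ) : EReal) := by
  rw [ereal_coe_sum]
  refine Finset.sum_congr rfl fun i _ => ?_
  by_cases hpi : p i = 0
  · simp [hpi]
  · rw [if_neg hpi, elog, if_neg (h i hpi), ← EReal.coe_mul]

/-- Real Gibbs inequality (with the convention that terms where `p i = 0` vanish). -/
private lemma real_gibbs {ι : Type*} [Fintype ι] (p q : ι → ℝ)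
    (hp0 : ∀ i, 0 ≤ p i) (hp1 : ∑ i, p i = 1)
    (hq0 : ∀ i, 0 ≤ q i) (hq1 : ∑ i, q i = 1)
    (h : ∀ i, p i ≠ 0 → q i ≠ 0) :
    (∑ i, if p i = 0 then 0 else p i * Real.log (q i))
      ≤ ∑ i, if p i = 0 then 0 else p i * Real.log (p i) := by
  have key : ∀ i, (if p i = 0 then (0:ℝ) else p i * Real.log (q i))
      ≤ (if p i = 0 then 0 else p i * Real.log (p i))
        + (if p i = 0 then 0 else q i - p i) := by
    intro i
    by_cases hpi : p i = 0
    · simp [hpi]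
    · rw [if_neg hpi, if_neg hpi, if_neg hpi]
      have hppos : 0 < p i := lt_of_le_of_ne (hp0 i) (Ne.symm hpi)
      have hqpos : 0 < q i := lt_of_le_of_ne (hq0 i) (Ne.symm (h i hpi))
      have hlog : Real.log (q i / p i) ≤ q i / p i - 1 :=
        Real.log_le_sub_one_of_pos (div_pos hqpos hppos)
      rw [Real.log_div (ne_of_gt hqpos) (ne_of_gt hppos)] at hlog
      have := mul_le_mul_of_nonneg_left hlog (le_of_lt hppos)
      have hdiv : p i * (q i / p i - 1) = q i - p i := by field_simp
      nlinarith
  have hsum : (∑ i, if p i = 0 then (0:ℝ) else q i - p i) ≤ 0 := by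
    have h1 : (∑ i, if p i = 0 then (0:ℝ) else q i) ≤ ∑ i, q i := by
      refine Finset.sum_le_sum fun i _ => ?_
      by_cases hpi : p i = 0 <;> simp [hpi, hq0 i]
    have h2 : (∑ i, if p i = 0 then (0:ℝ) else p i) = ∑ i, p i := by
      refine Finset.sum_congr rfl fun i _ => ?_
      by_cases hpi : p i = 0 <;> simp [hpi]
    have h3 : (∑ i, if p i = 0 then (0:ℝ) else q i - p i)
        = (∑ i, if p i = 0 then (0:ℝ) else q i) - (∑ i, if p i = 0 then (0:ℝ) else p i) := by
      rw [← Finset.sum_sub_distrib]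
      refine Finset.sum_congr rfl fun i _ => ?_
      by_cases hpi : p i = 0 <;> simp [hpi]
    rw [h3, h2, hp1]
    linarith [h1, hq1.le, hq1.ge]
  calc (∑ i, if p i = 0 then (0:ℝ) else p i * Real.log (q i))
      ≤ ∑ i, ((if p i = 0 then 0 else p i * Real.log (p i))
          + (if p i = 0 then 0 else q i - p i)) := Finset.sum_le_sum fun i _ => key i
    _ = (∑ i, if p i = 0 then 0 else p i * Real.log (p i))
          + (∑ i, if p i = 0 then (0:ℝ) else q i - p i) := Finset.sum_add_distrib
    _ ≤ ∑ i, if p i = 0 then 0 else p i * Real.log (p i) := by linarith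

/-- Gibbs inequality in `EReal`. -/
private lemma ereal_gibbs {ι : Type*} [Fintype ι] (p q : ι → ℝ)
    (hp0 : ∀ i, 0 ≤ p i) (hp1 : ∑ i, p i = 1)
    (hq0 : ∀ i, 0 ≤ q i) (hq1 : ∑ i, q i = 1) :
    ∑ i, (p i : EReal) * elog (q i) ≤ ∑ i, (p i : EReal) * elog (p i) := by
  by_cases hcase : ∀ i, p i ≠ 0 → q i ≠ 0
  · rw [sum_mul_elog_eq p q hcase, sum_mul_elog_eq p p (fun i hi => hi)]
    exact EReal.coe_le_coe_iff.2 (real_gibbs p q hp0 hp1 hq0 hq1 hcase)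
  · push_neg at hcase
    obtain ⟨i, hpi, hqi⟩ := hcase
    have hterm : (p i : EReal) * elog (q i) = ⊥ := by
      rw [elog, if_pos hqi]
      exact EReal.mul_bot_of_pos (EReal.coe_pos.2 (lt_of_le_of_ne (hp0 i) (Ne.symm hpi)))
    rw [ereal_sum_eq_bot (Finset.mem_univ i) hterm]
    exact bot_le

/-- in the deterministic tabular setting, the value-aware policy `π*` globally
maximizes `R̄`, and `R̄(π*)` is a real number (in particular `R̄(π*) > −∞`). -/
theorem stmt7 {S A : Type*} [Fintype S] [Fintype A] [Nonempty S] [Nonempty A]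
    (f : S → A → S)
    (d : S → ℝ) (hd0 : ∀ s, 0 ≤ d s) (hd1 : ∑ s, d s = 1)
    (β : S → A → ℝ) (hβ0 : ∀ s a, 0 ≤ β s a) (hβ1 : ∀ s, ∑ a, β s a = 1)
    (N : S → S → ℝ)
    (hN : ∀ s s', N s s' = ∑ a, β s a * (if f s a = s' then (1 : ℝ) else 0))
    (V : S → ℝ) (α : ℝ)
    (Z : S → ℝ) (hZ : ∀ s, Z s = ∑ s', Real.exp (α * V s') * N s s')
    (πst : S → A → ℝ)
    (hπst : ∀ s a, πst s a = Real.exp (α * V (f s a)) * β s a / Z s) :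
    (∀ π : S → A → ℝ, (∀ s a, 0 ≤ π s a) → (∀ s, ∑ a, π s a = 1) →
      RbarDet d N V α Z f π ≤ RbarDet d N V α Z f πst) ∧
    (∃ r : ℝ, RbarDet d N V α Z f πst = (r : EReal)) := by
  -- Z rewritten as a sum over actions
  have hZ' : ∀ s, Z s = ∑ a, Real.exp (α * V (f s a)) * β s a := by
    intro s
    rw [hZ]
    calc ∑ s', Real.exp (α * V s') * N s s'
        = ∑ s', ∑ a, Real.exp (α * V s') * (β s a * (if f s a = s' then (1:ℝ) else 0)) := by
          refine Finset.sum_congr rfl fun s' _ => ?_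
          rw [hN, Finset.mul_sum]
      _ = ∑ a, ∑ s', Real.exp (α * V s') * (β s a * (if f s a = s' then (1:ℝ) else 0)) :=
          Finset.sum_comm
      _ = ∑ a, Real.exp (α * V (f s a)) * β s a := by
          refine Finset.sum_congr rfl fun a _ => ?_
          rw [Finset.sum_eq_single (f s a)]
          · simp
          · intro b _ hb
            simp [Ne.symm hb]
          · simp
  have hZpos : ∀ s, 0 < Z s := by
    intro s
    rw [hZ' s]
    have hex : ∃ a ∈ (Finset.univ : Finset A), 0 < Real.exp (α * V (f s a)) * β s a := by
      by_contra hcon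
      push_neg at hcon
      have : ∀ a, β s a = 0 := by
        intro a
        have h1 := hcon a (Finset.mem_univ a)
        have h2 := hβ0 s a
        have h3 := Real.exp_pos (α * V (f s a))
        nlinarith
      have : (∑ a, β s a) = 0 := by simp [this]
      rw [hβ1 s] at this
      norm_num at this
    exact Finset.sum_pos' (fun a _ => mul_nonneg (Real.exp_pos _).le (hβ0 s a)) hex
  -- p s s' := N s s' * (exp(αV s')/Z s)
  set p : S → S → ℝ := fun s s' => N s s' * (Real.exp (α * V s') / Z s) with hp
  have hN0 : ∀ s s', 0 ≤ N s s' := by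
    intro s s'
    rw [hN]
    refine Finset.sum_nonneg fun a _ => mul_nonneg (hβ0 s a) ?_
    by_cases h : f s a = s' <;> simp [h]
  have hp0 : ∀ s s', 0 ≤ p s s' := fun s s' =>
    mul_nonneg (hN0 s s') (div_nonneg (Real.exp_pos _).le (hZpos s).le)
  have hp1 : ∀ s, ∑ s', p s s' = 1 := by
    intro s
    have : ∑ s', p s s' = (∑ s', Real.exp (α * V s') * N s s') * (Z s)⁻¹ := by
      rw [Finset.sum_mul]
      exact Finset.sum_congr rfl fun s' _ => by rw [hp]; ring
    rw [this, ← hZ s, mul_inv_cancel₀ (hZpos s).ne']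
  -- key: the induced next-state distribution of πst is exactly p
  have hq : ∀ s s', (∑ a, πst s a * (if f s a = s' then (1:ℝ) else 0)) = p s s' := by
    intro s s'
    calc ∑ a, πst s a * (if f s a = s' then (1:ℝ) else 0)
        = ∑ a, (β s a * (if f s a = s' then (1:ℝ) else 0)) * (Real.exp (α * V s') / Z s) := by
          refine Finset.sum_congr rfl fun a _ => ?_
          rw [hπst]
          by_cases h : f s a = s'
          · rw [if_pos h, h]; ring
          · simp [h]
      _ = (∑ a, β s a * (if f s a = s' then (1:ℝ) else 0)) * (Real.exp (α * V s') / Z s) :=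
          (Finset.sum_mul _ _ _).symm
      _ = p s s' := by rw [← hN]
  -- marginal of any policy is a pmf over next states
  have hqpmf : ∀ (π : S → A → ℝ), (∀ s a, 0 ≤ π s a) → (∀ s, ∑ a, π s a = 1) →
      ∀ s, (∀ s', 0 ≤ ∑ a, π s a * (if f s a = s' then (1:ℝ) else 0)) ∧
        (∑ s', ∑ a, π s a * (if f s a = s' then (1:ℝ) else 0)) = 1 := by
    intro π hπ0 hπ1 s
    constructor
    · intro s'
      refine Finset.sum_nonneg fun a _ => mul_nonneg (hπ0 s a) ?_
      by_cases h : f s a = s' <;> simp [h]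
    · rw [Finset.sum_comm]
      have : ∀ a, ∑ s', π s a * (if f s a = s' then (1:ℝ) else 0) = π s a := by
        intro a
        rw [Finset.sum_eq_single (f s a)]
        · simp
        · intro b _ hb; simp [Ne.symm hb]
        · simp
      simp only [this]
      exact hπ1 s
  constructor
  · intro π hπ0 hπ1
    unfold RbarDet
    refine Finset.sum_le_sum fun s _ => ?_
    refine mul_le_mul_of_nonneg_left ?_ (EReal.coe_nonneg.2 (hd0 s))
    have hqs := hqpmf π hπ0 hπ1 s
    have hqst := hqpmf πst
      (fun s a => by rw [hπst]; exact div_nonneg (mul_nonneg (Real.exp_pos _).le (hβ0 s a)) (hZpos s).le)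
      (fun s => by
        have h1 : ∑ a, πst s a = ∑ s', ∑ a, πst s a * (if f s a = s' then (1:ℝ) else 0) := by
          rw [Finset.sum_comm]
          refine Finset.sum_congr rfl fun a _ => ?_
          rw [Finset.sum_eq_single (f s a)]
          · simp
          · intro b _ hb; simp [Ne.symm hb]
          · simp
        rw [h1]
        simp only [hq]
        exact hp1 s) s
    calc ∑ s', ((N s s' * (Real.exp (α * V s') / Z s) : ℝ) : EReal) *
          elog (∑ a, π s a * (if f s a = s' then (1:ℝ) else 0))
        ≤ ∑ s', ((p s s' : ℝ) : EReal) * elog (p s s') :=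
          ereal_gibbs (p s) (fun s' => ∑ a, π s a * (if f s a = s' then (1:ℝ) else 0))
            (hp0 s) (hp1 s) hqs.1 hqs.2
      _ = ∑ s', ((N s s' * (Real.exp (α * V s') / Z s) : ℝ) : EReal) *
          elog (∑ a, πst s a * (if f s a = s' then (1:ℝ) else 0)) := by
          refine Finset.sum_congr rfl fun s' _ => ?_
          rw [hq]
  · refine ⟨∑ s, d s * ∑ s', if p s s' = 0 then 0 else p s s' * Real.log (p s s'), ?_⟩
    unfold RbarDet
    rw [ereal_coe_sum]
    refine Finset.sum_congr rfl fun s _ => ?_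
    have hinner : ∑ s', ((N s s' * (Real.exp (α * V s') / Z s) : ℝ) : EReal) *
        elog (∑ a, πst s a * (if f s a = s' then (1:ℝ) else 0))
        = ((∑ s', if p s s' = 0 then 0 else p s s' * Real.log (p s s') : ℝ) : EReal) := by
      calc ∑ s', ((N s s' * (Real.exp (α * V s') / Z s) : ℝ) : EReal) *
            elog (∑ a, πst s a * (if f s a = s' then (1:ℝ) else 0))
          = ∑ s', ((p s s' : ℝ) : EReal) * elog (p s s') := by
            refine Finset.sum_congr rfl fun s' _ => ?_
            rw [hq]
        _ = _ := sum_mul_elog_eq (p s) (p s) (fun _ h => h)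
    rw [hinner, ← EReal.coe_mul]
end

section
/- In the stochastic tabular setting, for every policy π, R̄(π_in) ≥ R̄(π), the inequality holding in the extended reals, where π_in is the projection of π onto the support of the behavior policy β. -/
open scoped BigOperators Classical

/-- The regularizer
`R̄(π) = Σ_s d(s)·Σ_{s'} N(s'|s)·(exp(α V(s'))/Z(s))·log(Σ_a M(s'|s,a)·π(a|s))`,
valued in the extended reals. -/
noncomputable def RbarSto {S A : Type*} [Fintype S] [Fintype A]
    (d : S → ℝ) (N : S → S → ℝ) (V : S → ℝ) (α : ℝ) (Z : S → ℝ)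
    (M : S → A → S → ℝ) (π : S → A → ℝ) : EReal :=
  ∑ s, (d s : EReal) *
    ∑ s', ((N s s' * (Real.exp (α * V s') / Z s) : ℝ) : EReal) *
      elog (∑ a, M s a s' * π s a)

lemma elog_mono {x y : ℝ} (hx : 0 ≤ x) (h : x ≤ y) : elog x ≤ elog y := by
  unfold elog
  by_cases h1 : x = 0
  · simp [h1]
  · have hx' : 0 < x := lt_of_le_of_ne hx (Ne.symm h1)
    have hy' : 0 < y := lt_of_lt_of_le hx' h
    rw [if_neg h1, if_neg (ne_of_gt hy')]
    exact_mod_cast Real.log_le_log hx' h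

/-- in the stochastic tabular setting, projecting a policy onto the support of the
behavior policy does not decrease the regularizer: `R̄(π_in) ≥ R̄(π)`. -/
theorem stmt11 {S A : Type*} [Fintype S] [Fintype A] [Nonempty S] [Nonempty A]
    (d : S → ℝ) (hd0 : ∀ s, 0 ≤ d s) (hd1 : ∑ s, d s = 1)
    (β : S → A → ℝ) (hβ0 : ∀ s a, 0 ≤ β s a) (hβ1 : ∀ s, ∑ a, β s a = 1)
    (M : S → A → S → ℝ) (hM0 : ∀ s a s', 0 ≤ M s a s')
    (hMzero : ∀ s a, β s a = 0 → ∀ s', M s a s' = 0)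
    (hMpmf : ∀ s a, 0 < β s a → ∑ s', M s a s' = 1)
    (N : S → S → ℝ) (hN : ∀ s s', N s s' = ∑ a, β s a * M s a s')
    (V : S → ℝ) (α : ℝ)
    (Z : S → ℝ) (hZ : ∀ s, Z s = ∑ s', Real.exp (α * V s') * N s s')
    (π : S → A → ℝ) (hπ0 : ∀ s a, 0 ≤ π s a) (hπ1 : ∀ s, ∑ a, π s a = 1)
    (ε : S → ℝ) (hε : ∀ s, ε s = ∑ a ∈ Finset.univ.filter (fun a => β s a = 0), π s a)
    (n : S → ℕ) (hn : ∀ s, n s = (Finset.univ.filter (fun a => 0 < β s a)).card)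
    (πin : S → A → ℝ)
    (hπin : ∀ s a, πin s a = if 0 < β s a then π s a + ε s / n s else 0) :
    RbarSto d N V α Z M π ≤ RbarSto d N V α Z M πin := by
  unfold RbarSto
  apply Finset.sum_le_sum
  intro s _
  apply mul_le_mul_of_nonneg_left _ (by exact_mod_cast hd0 s)
  apply Finset.sum_le_sum
  intro s' _
  have hZnn : 0 ≤ Z s := by
    rw [hZ]
    apply Finset.sum_nonneg
    intro t _
    have : 0 ≤ N s t := by
      rw [hN]
      exact Finset.sum_nonneg fun a _ => mul_nonneg (hβ0 s a) (hM0 s a t)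
    positivity
  have hNnn : 0 ≤ N s s' := by
    rw [hN]
    exact Finset.sum_nonneg fun a _ => mul_nonneg (hβ0 s a) (hM0 s a s')
  have hc : (0 : ℝ) ≤ N s s' * (Real.exp (α * V s') / Z s) := by positivity
  apply mul_le_mul_of_nonneg_left _ (by exact_mod_cast hc)
  apply elog_mono
  · exact Finset.sum_nonneg fun a _ => mul_nonneg (hM0 s a s') (hπ0 s a)
  · apply Finset.sum_le_sum
    intro a _
    rcases (hβ0 s a).lt_or_eq with hβ | hβ
    · have hεnn : 0 ≤ ε s := by
        rw [hε]
        exact Finset.sum_nonneg fun b _ => hπ0 s b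
      have : π s a ≤ πin s a := by
        rw [hπin, if_pos hβ]
        have : 0 ≤ ε s / n s := by positivity
        linarith
      exact mul_le_mul_of_nonneg_left this (hM0 s a s')
    · rw [hMzero s a hβ.symm s']
      simp
end

section
/- In the stochastic tabular setting, let π be a policy with R̄(π) > −∞. If there exists a state s₁ with d(s₁) > 0 and an action ã with π(ã|s₁) > 0 and β(ã|s₁) = 0 (i.e., π is not constrained within the support of the behavior policy at some state in the support of d), then R̄(π_in) > R̄(π). -/
open scoped BigOperators Classical

lemma ecoe_fsum {ι : Type*} (s : Finset ι) (f : ι → ℝ) :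
    ((∑ i ∈ s, f i : ℝ) : EReal) = ∑ i ∈ s, ((f i : ℝ) : EReal) := by
  induction s using Finset.cons_induction with
  | empty => simp
  | cons a s ha ih => rw [Finset.sum_cons, Finset.sum_cons, EReal.coe_add, ih]

lemma esum_eq_bot {ι : Type*} (s : Finset ι) (f : ι → EReal) {x : ι}
    (hx : x ∈ s) (h : f x = ⊥) : ∑ y ∈ s, f y = ⊥ := by
  rw [← Finset.add_sum_erase s f hx, h, EReal.bot_add]

/-- If all the relevant summands are positive, the regularizer is the coercion of a real sum. -/
lemma RbarSto_repr {S A : Type*} [Fintype S] [Fintype A]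
    (d : S → ℝ) (N : S → S → ℝ) (V : S → ℝ) (α : ℝ) (Z : S → ℝ)
    (M : S → A → S → ℝ) (p : S → A → ℝ)
    (hd0 : ∀ s, 0 ≤ d s)
    (hw0 : ∀ s s', 0 ≤ N s s' * (Real.exp (α * V s') / Z s))
    (hpos : ∀ s, 0 < d s → ∀ s', 0 < N s s' * (Real.exp (α * V s') / Z s) →
      0 < ∑ a, M s a s' * p s a) :
    RbarSto d N V α Z M p =
      ((∑ s, d s * ∑ s', (N s s' * (Real.exp (α * V s') / Z s)) *
        Real.log (∑ a, M s a s' * p s a) : ℝ) : EReal) := by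
  unfold RbarSto
  rw [ecoe_fsum]
  refine Finset.sum_congr rfl fun s _ => ?_
  rcases (hd0 s).lt_or_eq with hds | hds
  · rw [EReal.coe_mul, ecoe_fsum]
    congr 1
    refine Finset.sum_congr rfl fun s' _ => ?_
    rcases (hw0 s s').lt_or_eq with hws | hws
    · have hf := hpos s hds s' hws
      rw [elog, if_neg hf.ne', ← EReal.coe_mul]
    · rw [← hws]
      simp
  · rw [← hds]
    simp

/-- in the stochastic tabular setting, if `R̄(π) > −∞` and `π` takes an action
outside the support of `β` with positive probability at some state in the support of `d`, then
the projected policy `π_in` strictly improves the regularizer: `R̄(π_in) > R̄(π)`. -/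
theorem stmt13 {S A : Type*} [Fintype S] [Fintype A] [Nonempty S] [Nonempty A]
    (d : S → ℝ) (hd0 : ∀ s, 0 ≤ d s) (hd1 : ∑ s, d s = 1)
    (β : S → A → ℝ) (hβ0 : ∀ s a, 0 ≤ β s a) (hβ1 : ∀ s, ∑ a, β s a = 1)
    (M : S → A → S → ℝ) (hM0 : ∀ s a s', 0 ≤ M s a s')
    (hMzero : ∀ s a, β s a = 0 → ∀ s', M s a s' = 0)
    (hMpmf : ∀ s a, 0 < β s a → ∑ s', M s a s' = 1)
    (N : S → S → ℝ) (hN : ∀ s s', N s s' = ∑ a, β s a * M s a s')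
    (V : S → ℝ) (α : ℝ)
    (Z : S → ℝ) (hZ : ∀ s, Z s = ∑ s', Real.exp (α * V s') * N s s')
    (π : S → A → ℝ) (hπ0 : ∀ s a, 0 ≤ π s a) (hπ1 : ∀ s, ∑ a, π s a = 1)
    (ε : S → ℝ) (hε : ∀ s, ε s = ∑ a ∈ Finset.univ.filter (fun a => β s a = 0), π s a)
    (n : S → ℕ) (hn : ∀ s, n s = (Finset.univ.filter (fun a => 0 < β s a)).card)
    (πin : S → A → ℝ)
    (hπin : ∀ s a, πin s a = if 0 < β s a then π s a + ε s / n s else 0)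
    (hfin : (⊥ : EReal) < RbarSto d N V α Z M π)
    (s₁ : S) (hs₁ : 0 < d s₁)
    (atil : A) (hπatil : 0 < π s₁ atil) (hβatil : β s₁ atil = 0) :
    RbarSto d N V α Z M π < RbarSto d N V α Z M πin := by
  classical
  -- basic positivity facts
  have hN0 : ∀ s s', 0 ≤ N s s' := by
    intro s s'
    rw [hN]
    exact Finset.sum_nonneg fun a _ => mul_nonneg (hβ0 s a) (hM0 s a s')
  have hZ0 : ∀ s, 0 ≤ Z s := by
    intro s
    rw [hZ]
    exact Finset.sum_nonneg fun s' _ => mul_nonneg (Real.exp_nonneg _) (hN0 s s')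
  have hw0 : ∀ s s', 0 ≤ N s s' * (Real.exp (α * V s') / Z s) :=
    fun s s' => mul_nonneg (hN0 s s') (div_nonneg (Real.exp_nonneg _) (hZ0 s))
  -- an action in the support of β at s₁
  obtain ⟨a₀, ha₀⟩ : ∃ a, 0 < β s₁ a := by
    by_contra h
    push_neg at h
    have h0 : ∑ a, β s₁ a = 0 :=
      Finset.sum_eq_zero fun a _ => le_antisymm (h a) (hβ0 s₁ a)
    rw [hβ1 s₁] at h0
    norm_num at h0
  have hε0 : ∀ s, 0 ≤ ε s := by
    intro s
    rw [hε]
    exact Finset.sum_nonneg fun a _ => hπ0 s a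
  have hεpos : 0 < ε s₁ := by
    rw [hε]
    exact Finset.sum_pos' (fun a _ => hπ0 s₁ a) ⟨atil, by simp [hβatil], hπatil⟩
  have hnpos : 0 < n s₁ := by
    rw [hn]
    exact Finset.card_pos.2 ⟨a₀, by simp [ha₀]⟩
  have hc0 : ∀ s, 0 ≤ ε s / n s := fun s => div_nonneg (hε0 s) (Nat.cast_nonneg _)
  have hcpos : 0 < ε s₁ / n s₁ := div_pos hεpos (by exact_mod_cast hnpos)
  -- termwise comparison of the inner policy sums
  have hterm_le : ∀ s a s', M s a s' * π s a ≤ M s a s' * πin s a := by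
    intro s a s'
    rcases (hβ0 s a).lt_or_eq with h | h
    · rw [hπin s a, if_pos h]
      exact mul_le_mul_of_nonneg_left (le_add_of_nonneg_right (hc0 s)) (hM0 s a s')
    · rw [hMzero s a h.symm s']
      simp
  have hFle : ∀ s s', (∑ a, M s a s' * π s a) ≤ ∑ a, M s a s' * πin s a :=
    fun s s' => Finset.sum_le_sum fun a _ => hterm_le s a s'
  have hF0 : ∀ s s', 0 ≤ ∑ a, M s a s' * π s a :=
    fun s s' => Finset.sum_nonneg fun a _ => mul_nonneg (hM0 s a s') (hπ0 s a)
  -- a successor state reachable via a₀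
  obtain ⟨s'₀, hs'₀⟩ : ∃ s', 0 < M s₁ a₀ s' := by
    by_contra h
    push_neg at h
    have h0 : ∑ s', M s₁ a₀ s' = 0 :=
      Finset.sum_eq_zero fun s' _ => le_antisymm (h s') (hM0 s₁ a₀ s')
    rw [hMpmf s₁ a₀ ha₀] at h0
    norm_num at h0
  have hFlt : (∑ a, M s₁ a s'₀ * π s₁ a) < ∑ a, M s₁ a s'₀ * πin s₁ a := by
    refine Finset.sum_lt_sum (fun a _ => hterm_le s₁ a s'₀) ⟨a₀, Finset.mem_univ _, ?_⟩
    rw [hπin s₁ a₀, if_pos ha₀]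
    exact mul_lt_mul_of_pos_left (lt_add_of_pos_right _ hcpos) hs'₀
  have hNpos : 0 < N s₁ s'₀ := by
    rw [hN]
    exact Finset.sum_pos' (fun a _ => mul_nonneg (hβ0 s₁ a) (hM0 s₁ a s'₀))
      ⟨a₀, Finset.mem_univ _, mul_pos ha₀ hs'₀⟩
  have hZpos : 0 < Z s₁ := by
    rw [hZ]
    exact Finset.sum_pos' (fun s' _ => mul_nonneg (Real.exp_nonneg _) (hN0 s₁ s'))
      ⟨s'₀, Finset.mem_univ _, mul_pos (Real.exp_pos _) hNpos⟩
  have hwpos : 0 < N s₁ s'₀ * (Real.exp (α * V s'₀) / Z s₁) :=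
    mul_pos hNpos (div_pos (Real.exp_pos _) hZpos)
  -- finiteness: wherever the weight is positive (and d is), the inner sum for π is positive
  have hfinpos : ∀ s, 0 < d s → ∀ s', 0 < N s s' * (Real.exp (α * V s') / Z s) →
      0 < ∑ a, M s a s' * π s a := by
    intro s hds s' hws
    rcases (hF0 s s').lt_or_eq with h | h
    · exact h
    · exfalso
      have hb : ((N s s' * (Real.exp (α * V s') / Z s) : ℝ) : EReal) *
          elog (∑ a, M s a s' * π s a) = ⊥ := by
        rw [elog, if_pos h.symm]
        exact EReal.coe_mul_bot_of_pos hws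
      have hinner : (∑ t, ((N s t * (Real.exp (α * V t) / Z s) : ℝ) : EReal) *
          elog (∑ a, M s a t * π s a)) = ⊥ :=
        esum_eq_bot _ _ (Finset.mem_univ s') hb
      have houter : RbarSto d N V α Z M π = ⊥ := by
        unfold RbarSto
        refine esum_eq_bot _ _ (Finset.mem_univ s) ?_
        rw [hinner]
        exact EReal.coe_mul_bot_of_pos hds
      exact hfin.ne' houter
  have hfinpos' : ∀ s, 0 < d s → ∀ s', 0 < N s s' * (Real.exp (α * V s') / Z s) →
      0 < ∑ a, M s a s' * πin s a :=
    fun s hds s' hws => lt_of_lt_of_le (hfinpos s hds s' hws) (hFle s s')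
  -- pass to real numbers
  rw [RbarSto_repr d N V α Z M π hd0 hw0 hfinpos,
    RbarSto_repr d N V α Z M πin hd0 hw0 hfinpos', EReal.coe_lt_coe_iff]
  -- inner comparison
  have inner_le : ∀ s, 0 < d s →
      (∑ s', (N s s' * (Real.exp (α * V s') / Z s)) * Real.log (∑ a, M s a s' * π s a)) ≤
      ∑ s', (N s s' * (Real.exp (α * V s') / Z s)) * Real.log (∑ a, M s a s' * πin s a) := by
    intro s hds
    refine Finset.sum_le_sum fun s' _ => ?_
    rcases (hw0 s s').lt_or_eq with hws | hws
    · exact mul_le_mul_of_nonneg_left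
        (Real.log_le_log (hfinpos s hds s' hws) (hFle s s')) (hw0 s s')
    · rw [← hws]
      simp
  refine Finset.sum_lt_sum (fun s _ => ?_) ⟨s₁, Finset.mem_univ _, ?_⟩
  · rcases (hd0 s).lt_or_eq with hds | hds
    · exact mul_le_mul_of_nonneg_left (inner_le s hds) (hd0 s)
    · rw [← hds]
      simp
  · refine mul_lt_mul_of_pos_left ?_ hs₁
    refine Finset.sum_lt_sum (fun s' _ => ?_) ⟨s'₀, Finset.mem_univ _, ?_⟩
    · rcases (hw0 s₁ s').lt_or_eq with hws | hws
      · exact mul_le_mul_of_nonneg_left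
          (Real.log_le_log (hfinpos s₁ hs₁ s' hws) (hFle s₁ s')) (hw0 s₁ s')
      · rw [← hws]
        simp
    · exact mul_lt_mul_of_pos_left
        (Real.log_lt_log (hfinpos s₁ hs₁ s'₀ hwpos) hFlt) hwpos
end
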